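/- Let φ_ap ∈ C([t₀,T),F) be an approximate solution of the Volterra problem VP(f₀,t₀), let ℰ ∈ C([t₀,T),[0,∞)) satisfy ‖E(φ_ap)(t)‖ ≤ ℰ(t) for all t ∈ [t₀,T), and let ℓ be a growth estimator for P from φ_ap, defined on the subgraph of a function ρ ∈ C([t₀,T),(0,∞]). If there exists ℛ ∈ C([t₀,T),[0,∞)) with ℛ(t) < ρ(t) for all t ∈ [t₀,T) and satisfying the control inequality ℰ(t) + ∫_{t₀}^t u₋(t−s) ℓ(ℛ(s),s) ds ≤ ℛ(t) for all t ∈ [t₀,T), then VP(f₀,t₀) has a solution φ : [t₀,T) → F, and ‖φ(t) − φ_ap(t)‖ ≤ ℛ(t) for all t ∈ [t₀,T). -/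

import Mathlib

open Set MeasureTheory

open intervalIntegral Filter

namespace VPaux

variable {um : ℝ → ℝ} {σ : ℝ}

lemma um_pow_bound (hum_cont : ContinuousOn um (Ioi 0))
    (hum_pos : ∀ t > (0:ℝ), 0 < um t) (hσ : σ ∈ Ioc (0:ℝ) 1)
    (hum_O : ∃ C : ℝ, ∃ δ > (0:ℝ), ∀ t ∈ Ioo (0:ℝ) δ, um t ≤ C / t ^ (1 - σ))
    {b : ℝ} (hb : 0 < b) :
    ∃ A : ℝ, 0 ≤ A ∧ ∀ u ∈ Ioc (0:ℝ) b, um u ≤ A * u ^ (σ - 1) := by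
  obtain ⟨C, δ, hδ, hC⟩ := hum_O
  set δ' := min (δ/2) b with hδ'def
  have hδ'pos : 0 < δ' := lt_min (by linarith) hb
  have hδ'b : δ' ≤ b := min_le_right _ _
  have hδ'δ : δ' < δ := lt_of_le_of_lt (min_le_left _ _) (by linarith)
  obtain ⟨Mc, hMc⟩ : ∃ Mc, ∀ u ∈ Icc δ' b, ‖um u‖ ≤ Mc :=
    isCompact_Icc.exists_bound_of_continuousOn
      (hum_cont.mono (fun x hx => lt_of_lt_of_le hδ'pos hx.1))
  have hMc0 : 0 ≤ Mc := le_trans (norm_nonneg _) (hMc δ' ⟨le_refl _, hδ'b⟩)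
  refine ⟨max C 0 + Mc * b ^ (1 - σ), by positivity, ?_⟩
  rintro u ⟨hu0, hub⟩
  have hupow : (0:ℝ) < u ^ (σ - 1) := Real.rpow_pos_of_pos hu0 _
  rcases lt_or_ge u δ' with h | h
  · have h1 : um u ≤ C / u ^ (1 - σ) := hC u ⟨hu0, lt_trans h hδ'δ⟩
    have h2 : C / u ^ (1 - σ) = C * u ^ (σ - 1) := by
      rw [div_eq_mul_inv, ← Real.rpow_neg hu0.le, neg_sub]
    have h3 : C * u ^ (σ - 1) ≤ (max C 0) * u ^ (σ - 1) :=
      mul_le_mul_of_nonneg_right (le_max_left _ _) hupow.le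
    have h4 : (max C 0) * u ^ (σ - 1) ≤ (max C 0 + Mc * b ^ (1 - σ)) * u ^ (σ - 1) := by
      apply mul_le_mul_of_nonneg_right _ hupow.le
      have : (0:ℝ) ≤ Mc * b ^ (1 - σ) := by positivity
      linarith
    linarith [h1, h2 ▸ h1]
  · have h1 : um u ≤ Mc := le_trans (le_abs_self _) (hMc u ⟨h, hub⟩)
    have hbpow : b ^ (σ - 1) ≤ u ^ (σ - 1) :=
      Real.rpow_le_rpow_of_nonpos hu0 hub (by linarith [hσ.2])
    have hkey : Mc = (Mc * b ^ (1 - σ)) * b ^ (σ - 1) := by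
      rw [mul_assoc, ← Real.rpow_add hb]
      norm_num
    have h2 : Mc ≤ (Mc * b ^ (1 - σ)) * u ^ (σ - 1) :=
      hkey.trans_le (mul_le_mul_of_nonneg_left hbpow (by positivity))
    have h3 : (Mc * b ^ (1 - σ)) * u ^ (σ - 1) ≤ (max C 0 + Mc * b ^ (1 - σ)) * u ^ (σ - 1) := by
      apply mul_le_mul_of_nonneg_right _ hupow.le
      have : (0:ℝ) ≤ max C 0 := le_max_right _ _
      linarith
    linarith

lemma um_integrable (hum_cont : ContinuousOn um (Ioi 0))
    (hum_pos : ∀ t > (0:ℝ), 0 < um t) (hσ : σ ∈ Ioc (0:ℝ) 1)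
    (hum_O : ∃ C : ℝ, ∃ δ > (0:ℝ), ∀ t ∈ Ioo (0:ℝ) δ, um t ≤ C / t ^ (1 - σ))
    {b : ℝ} (hb : 0 ≤ b) :
    IntervalIntegrable um volume 0 b := by
  rcases eq_or_lt_of_le hb with rfl | hb'
  · exact IntervalIntegrable.refl
  obtain ⟨A, hA0, hA⟩ := um_pow_bound hum_cont hum_pos hσ hum_O hb'
  rw [intervalIntegrable_iff_integrableOn_Ioc_of_le hb]
  have hdom : IntegrableOn (fun u => A * u ^ (σ - 1)) (Ioc 0 b) volume := by
    rw [← intervalIntegrable_iff_integrableOn_Ioc_of_le hb]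
    exact (intervalIntegrable_rpow' (by linarith [hσ.1])).const_mul A
  have hmeas : AEStronglyMeasurable um (volume.restrict (Ioc 0 b)) :=
    (hum_cont.mono (fun x hx => hx.1)).aestronglyMeasurable measurableSet_Ioc
  refine hdom.mono' hmeas ?_
  rw [ae_restrict_iff' measurableSet_Ioc]
  filter_upwards with u hu
  rw [Real.norm_eq_abs, abs_of_pos (hum_pos u hu.1)]
  exact hA u hu

end VPaux

namespace VPaux
variable {um : ℝ → ℝ}

lemma mem_Ioc_ae {b₁ b₂ : ℝ} :
    ∀ᵐ u ∂(volume.restrict (Icc b₁ b₂)), u ∈ Ioc b₁ b₂ := by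
  rw [← Measure.restrict_congr_set Ioc_ae_eq_Icc]
  exact ae_restrict_mem measurableSet_Ioc

lemma umk_integrable {k : ℝ → ℝ} {b' : ℝ} (hb : 0 ≤ b')
    (hum_int : IntervalIntegrable um volume 0 b')
    (hk : ContinuousOn k (Icc 0 b')) :
    IntervalIntegrable (fun u => um u * k u) volume 0 b' := by
  have h2 : (fun u => um u * k u) = fun u => k u * um u := funext fun u => mul_comm _ _
  rw [h2]
  exact hum_int.continuousOn_mul (by rwa [uIcc_of_le hb])

lemma umk_nonneg (hum_pos : ∀ t > (0:ℝ), 0 < um t) {k : ℝ → ℝ} {b₁ b₂ : ℝ}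
    (h1 : 0 ≤ b₁) (h12 : b₁ ≤ b₂) (hk : ∀ u ∈ Ioc b₁ b₂, 0 ≤ k u) :
    0 ≤ ∫ u in b₁..b₂, um u * k u := by
  refine integral_nonneg_of_ae_restrict h12 (mem_Ioc_ae.mono fun u hu => ?_)
  exact mul_nonneg (hum_pos u (lt_of_le_of_lt h1 hu.1)).le (hk u hu)

lemma umk_mono_right (hum_pos : ∀ t > (0:ℝ), 0 < um t) {k : ℝ → ℝ} {a b₁ b₂ : ℝ}
    (hum_int : IntervalIntegrable um volume 0 a)
    (hk : ContinuousOn k (Icc 0 a)) (hknn : ∀ u ∈ Ioc (0:ℝ) a, 0 ≤ k u)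
    (h1 : 0 ≤ b₁) (h12 : b₁ ≤ b₂) (h2a : b₂ ≤ a) :
    ∫ u in (0:ℝ)..b₁, um u * k u ≤ ∫ u in (0:ℝ)..b₂, um u * k u := by
  have ha : (0:ℝ) ≤ a := le_trans (le_trans h1 h12) h2a
  have i2 : IntervalIntegrable (fun u => um u * k u) volume 0 a :=
    umk_integrable ha hum_int hk
  have i1 : IntervalIntegrable (fun u => um u * k u) volume 0 b₂ :=
    i2.mono_set (by rw [uIcc_of_le (le_trans h1 h12), uIcc_of_le ha]; exact Icc_subset_Icc (le_refl _) h2a)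
  have i0 : IntervalIntegrable (fun u => um u * k u) volume 0 b₁ :=
    i1.mono_set (by rw [uIcc_of_le h1, uIcc_of_le (le_trans h1 h12)]; exact Icc_subset_Icc (le_refl _) h12)
  have imid : IntervalIntegrable (fun u => um u * k u) volume b₁ b₂ :=
    i1.mono_set (by rw [uIcc_of_le h12, uIcc_of_le (le_trans h1 h12)]; exact Icc_subset_Icc h1 (le_refl _))
  have hadd := integral_add_adjacent_intervals i0 imid
  have hnn : 0 ≤ ∫ u in b₁..b₂, um u * k u :=
    umk_nonneg hum_pos h1 h12 (fun u hu => hknn u ⟨lt_of_le_of_lt h1 hu.1, le_trans hu.2 h2a⟩)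
  linarith

lemma umk_mono_ptwise (hum_pos : ∀ t > (0:ℝ), 0 < um t) {k₁ k₂ : ℝ → ℝ} {b₁ b₂ : ℝ}
    (h1 : 0 ≤ b₁) (h12 : b₁ ≤ b₂)
    (i1 : IntervalIntegrable (fun u => um u * k₁ u) volume b₁ b₂)
    (i2 : IntervalIntegrable (fun u => um u * k₂ u) volume b₁ b₂)
    (hk : ∀ u ∈ Ioc b₁ b₂, k₁ u ≤ k₂ u) :
    ∫ u in b₁..b₂, um u * k₁ u ≤ ∫ u in b₁..b₂, um u * k₂ u := by
  refine integral_mono_ae_restrict h12 i1 i2 (mem_Ioc_ae.mono fun u hu => ?_)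
  exact mul_le_mul_of_nonneg_left (hk u hu) (hum_pos u (lt_of_le_of_lt h1 hu.1)).le

lemma Ium_contOn {B : ℝ} (hB : 0 ≤ B) (hum_int : IntervalIntegrable um volume 0 B) :
    ContinuousOn (fun x => ∫ u in (0:ℝ)..x, um u) (Icc 0 B) := by
  have hint : IntegrableOn um (Icc 0 B) volume := by
    have := (intervalIntegrable_iff_integrableOn_Ioc_of_le hB).1 hum_int
    exact this.congr_set_ae Ioc_ae_eq_Icc.symm
  exact (continuousOn_primitive hint).congr fun x hx => integral_of_le hx.1

end VPaux

namespace VPaux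

lemma Wint_bound
    {F Fm : Type*} [NormedAddCommGroup F] [NormedSpace ℝ F]
    [NormedAddCommGroup Fm] [NormedSpace ℝ Fm]
    {W : ℝ → Fm → F}
    (hWcont : ContinuousOn (fun p : Fm × ℝ => W p.2 p.1) (univ ×ˢ Ioi (0:ℝ)))
    {um : ℝ → ℝ} (hum_pos : ∀ t > (0:ℝ), 0 < um t)
    (hum_bd : ∀ t > (0:ℝ), ∀ f : Fm, ‖W t f‖ ≤ um t * ‖f‖)
    {gv : ℝ → Fm} {hv : ℝ → ℝ} {b₁ b₂ : ℝ} (h1 : 0 ≤ b₁) (h12 : b₁ ≤ b₂)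
    (hgv : ContinuousOn gv (Icc b₁ b₂))
    (hint : IntervalIntegrable (fun u => um u * hv u) volume b₁ b₂)
    (hbd : ∀ u ∈ Ioc b₁ b₂, ‖gv u‖ ≤ hv u) :
    IntervalIntegrable (fun u => W u (gv u)) volume b₁ b₂ ∧
      ‖∫ u in b₁..b₂, W u (gv u)‖ ≤ ∫ u in b₁..b₂, um u * hv u := by
  have hmap : ContinuousOn (fun u => ((gv u, u) : Fm × ℝ)) (Ioc b₁ b₂) :=
    (hgv.mono Ioc_subset_Icc_self).prodMk continuousOn_id
  have hc : ContinuousOn (fun u => W u (gv u)) (Ioc b₁ b₂) :=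
    hWcont.comp hmap (fun u hu => ⟨mem_univ _, lt_of_le_of_lt h1 hu.1⟩)
  have hmeas : AEStronglyMeasurable (fun u => W u (gv u)) (volume.restrict (Ioc b₁ b₂)) :=
    hc.aestronglyMeasurable measurableSet_Ioc
  have hbd' : ∀ u ∈ Ioc b₁ b₂, ‖W u (gv u)‖ ≤ um u * hv u := by
    intro u hu
    have hu0 : 0 < u := lt_of_le_of_lt h1 hu.1
    exact le_trans (hum_bd u hu0 (gv u))
      (mul_le_mul_of_nonneg_left (hbd u hu) (hum_pos u hu0).le)
  have hii : IntervalIntegrable (fun u => W u (gv u)) volume b₁ b₂ := by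
    rw [intervalIntegrable_iff_integrableOn_Ioc_of_le h12]
    refine ((intervalIntegrable_iff_integrableOn_Ioc_of_le h12).1 hint).mono' hmeas ?_
    rw [ae_restrict_iff' measurableSet_Ioc]
    filter_upwards with u hu
    exact hbd' u hu
  refine ⟨hii, ?_⟩
  have hae : ∀ᵐ u ∂(volume.restrict (Set.uIoc b₁ b₂)), ‖W u (gv u)‖ ≤ um u * hv u := by
    rw [uIoc_of_le h12, ae_restrict_iff' measurableSet_Ioc]
    filter_upwards with u hu
    exact hbd' u hu
  have := norm_integral_le_abs_of_norm_le hae hint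
  rwa [abs_of_nonneg (umk_nonneg hum_pos h1 h12
    (fun u hu => le_trans (norm_nonneg _) (hbd u hu)))] at this

end VPaux

namespace VPaux

-- plain versions for um alone
lemma um_nonneg_int {um : ℝ → ℝ} (hum_pos : ∀ t > (0:ℝ), 0 < um t) {b₁ b₂ : ℝ}
    (h1 : 0 ≤ b₁) (h12 : b₁ ≤ b₂) : 0 ≤ ∫ u in b₁..b₂, um u := by
  refine integral_nonneg_of_ae_restrict h12 (mem_Ioc_ae.mono fun u hu => ?_)
  exact (hum_pos u (lt_of_le_of_lt h1 hu.1)).le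

lemma um_mono_right {um : ℝ → ℝ} (hum_pos : ∀ t > (0:ℝ), 0 < um t) {a b₁ b₂ : ℝ}
    (hum_int : IntervalIntegrable um volume 0 a)
    (h1 : 0 ≤ b₁) (h12 : b₁ ≤ b₂) (h2a : b₂ ≤ a) :
    ∫ u in (0:ℝ)..b₁, um u ≤ ∫ u in (0:ℝ)..b₂, um u := by
  have ha : (0:ℝ) ≤ a := le_trans (le_trans h1 h12) h2a
  have i1 : IntervalIntegrable um volume 0 b₂ :=
    hum_int.mono_set (by rw [uIcc_of_le (le_trans h1 h12), uIcc_of_le ha]; exact Icc_subset_Icc (le_refl _) h2a)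
  have i0 : IntervalIntegrable um volume 0 b₁ :=
    i1.mono_set (by rw [uIcc_of_le h1, uIcc_of_le (le_trans h1 h12)]; exact Icc_subset_Icc (le_refl _) h12)
  have imid : IntervalIntegrable um volume b₁ b₂ :=
    i1.mono_set (by rw [uIcc_of_le h12, uIcc_of_le (le_trans h1 h12)]; exact Icc_subset_Icc h1 (le_refl _))
  have hadd := integral_add_adjacent_intervals i0 imid
  have hnn : 0 ≤ ∫ u in b₁..b₂, um u := um_nonneg_int hum_pos h1 h12
  linarith

/-- Solution predicate on `[t₀, τ]`. -/
def SolOn {F Fm : Type*} [NormedAddCommGroup F] [NormedSpace ℝ F]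
    (W : ℝ → Fm → F) (P : F → ℝ → Fm) (v : ℝ → F) (φap : ℝ → F) (RR : ℝ → ℝ)
    (t₀ τ : ℝ) (φ : ℝ → F) : Prop :=
  ContinuousOn φ (Icc t₀ τ) ∧ (∀ s ∈ Icc t₀ τ, ‖φ s - φap s‖ ≤ RR s) ∧
    ∀ t ∈ Icc t₀ τ, φ t = v t + ∫ s in t₀..t, W (t - s) (P (φ s) s)

set_option maxHeartbeats 1000000 in
theorem solve
    {F Fm : Type*} [NormedAddCommGroup F] [NormedSpace ℝ F] [CompleteSpace F]
    [NormedAddCommGroup Fm] [NormedSpace ℝ Fm]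
    (W : ℝ → Fm → F)
    (hWcont : ContinuousOn (fun p : Fm × ℝ => W p.2 p.1) (univ ×ˢ Ioi (0:ℝ)))
    (hWsub : ∀ u > (0:ℝ), ∀ f g : Fm, W u (f - g) = W u f - W u g)
    (um : ℝ → ℝ) (hum_pos : ∀ t > (0:ℝ), 0 < um t)
    (hum_bd : ∀ t > (0:ℝ), ∀ f : Fm, ‖W t f‖ ≤ um t * ‖f‖)
    (hum_int : ∀ b : ℝ, 0 ≤ b → IntervalIntegrable um volume 0 b)
    (P : F → ℝ → Fm) (v φap : ℝ → F) (EE RR lgR : ℝ → ℝ) (L'' M'' : ℝ)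
    (t₀ τ : ℝ) (hτ : t₀ ≤ τ)
    (hgrow' : ∀ s ∈ Icc t₀ τ, ∀ f : F, ‖f - φap s‖ ≤ RR s →
      ‖P f s - P (φap s) s‖ ≤ lgR s)
    (hLipt : ∀ s ∈ Icc t₀ τ, ∀ s' ∈ Icc t₀ τ, ∀ f g : F, ‖f - φap s‖ ≤ RR s →
      ‖g - φap s'‖ ≤ RR s' → ‖P f s - P g s'‖ ≤ L'' * ‖f - g‖ + M'' * |s - s'|)
    (hL'' : 0 < L'')
    (hv : ContinuousOn v (Icc t₀ τ))
    (hφap : ContinuousOn φap (Icc t₀ τ))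
    (hRRc : ContinuousOn RR (Icc t₀ τ)) (hRR0 : ∀ s ∈ Icc t₀ τ, 0 ≤ RR s)
    (hlgRc : ContinuousOn lgR (Icc t₀ τ)) (hlgR0 : ∀ s ∈ Icc t₀ τ, 0 ≤ lgR s)
    (hEE' : ∀ t ∈ Icc t₀ τ, ‖φap t - v t - ∫ s in t₀..t, W (t - s) (P (φap s) s)‖ ≤ EE t)
    (hctrl' : ∀ t ∈ Icc t₀ τ, EE t + (∫ s in t₀..t, um (t - s) * lgR s) ≤ RR t) :
    (∃ φ, SolOn W P v φap RR t₀ τ φ) ∧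
      ∀ φ ψ, SolOn W P v φap RR t₀ τ φ → SolOn W P v φap RR t₀ τ ψ →
        EqOn φ ψ (Icc t₀ τ) := by
  classical
  have ha : (0:ℝ) ≤ τ - t₀ := by linarith
  -- change of variables identities
  have hconvW : ∀ (t : ℝ) (g : ℝ → Fm),
      (∫ s in t₀..t, W (t - s) (g s)) = ∫ u in (0:ℝ)..(t - t₀), W u (g (t - u)) := by
    intro t g
    have h := intervalIntegral.integral_comp_sub_left (a := t₀) (b := t)
      (fun u => W u (g (t - u))) t
    simp only [sub_sub_cancel] at h
    rw [h, sub_self]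
  have hconvum : ∀ (t : ℝ) (k : ℝ → ℝ),
      (∫ s in t₀..t, um (t - s) * k s) = ∫ u in (0:ℝ)..(t - t₀), um u * k (t - u) := by
    intro t k
    have h := intervalIntegral.integral_comp_sub_left (a := t₀) (b := t)
      (fun u => um u * k (t - u)) t
    simp only [sub_sub_cancel] at h
    rw [h, sub_self]
  -- continuity of s ↦ P (φ s) s for tube functions
  have hPcomp : ∀ φ : ℝ → F, ContinuousOn φ (Icc t₀ τ) →
      (∀ s ∈ Icc t₀ τ, ‖φ s - φap s‖ ≤ RR s) →
      ContinuousOn (fun s => P (φ s) s) (Icc t₀ τ) := by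
    intro φ hφc hφt s₀ hs₀
    have hA : Tendsto φ (nhdsWithin s₀ (Icc t₀ τ)) (nhds (φ s₀)) := hφc s₀ hs₀
    have h1 : Tendsto (fun s => ‖φ s - φ s₀‖) (nhdsWithin s₀ (Icc t₀ τ)) (nhds 0) := by
      have := (hA.sub (tendsto_const_nhds :
        Tendsto (fun _ : ℝ => φ s₀) (nhdsWithin s₀ (Icc t₀ τ)) (nhds (φ s₀)))).norm
      simpa using this
    have h2 : Tendsto (fun s : ℝ => |s - s₀|) (nhdsWithin s₀ (Icc t₀ τ)) (nhds 0) := by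
      have : Tendsto (fun s : ℝ => s - s₀) (nhdsWithin s₀ (Icc t₀ τ)) (nhds 0) := by
        have := (tendsto_id.mono_left (nhdsWithin_le_nhds (s := Icc t₀ τ))).sub
          (tendsto_const_nhds : Tendsto _ (nhdsWithin s₀ (Icc t₀ τ)) (nhds s₀))
        simpa using this
      simpa using this.abs
    have h0 : Tendsto (fun s => L'' * ‖φ s - φ s₀‖ + M'' * |s - s₀|)
        (nhdsWithin s₀ (Icc t₀ τ)) (nhds 0) := by
      have := (h1.const_mul L'').add (h2.const_mul M'')
      simpa using this
    rw [ContinuousWithinAt, tendsto_iff_dist_tendsto_zero]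
    refine squeeze_zero' (Filter.Eventually.of_forall fun s => dist_nonneg) ?_ h0
    filter_upwards [self_mem_nhdsWithin] with s hs
    rw [dist_eq_norm]
    exact hLipt s hs s₀ hs₀ (φ s) (φ s₀) (hφt s hs) (hφt s₀ hs₀)
  have hGex : ∀ g : ℝ → Fm, ContinuousOn g (Icc t₀ τ) →
      ∃ G : ℝ, 0 ≤ G ∧ ∀ s ∈ Icc t₀ τ, ‖g s‖ ≤ G := by
    intro g hg
    obtain ⟨G, hG⟩ := isCompact_Icc.exists_bound_of_continuousOn hg
    exact ⟨max G 0, le_max_right _ _, fun s hs => le_trans (hG s hs) (le_max_left _ _)⟩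
  -- the core kernel bound in s-form
  have core1 : ∀ (g : ℝ → Fm) (k : ℝ → ℝ) (t : ℝ), t ∈ Icc t₀ τ →
      ContinuousOn g (Icc t₀ τ) → ContinuousOn k (Icc t₀ τ) →
      (∀ s ∈ Ico t₀ t, ‖g s‖ ≤ k s) →
      IntervalIntegrable (fun u => W u (g (t - u))) volume 0 (t - t₀) ∧
        ‖∫ s in t₀..t, W (t - s) (g s)‖ ≤ ∫ s in t₀..t, um (t - s) * k s := by
    intro g k t ht hg hk hbd
    have hb : (0:ℝ) ≤ t - t₀ := by linarith [ht.1]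
    have hmapIcc : MapsTo (fun u => t - u) (Icc (0:ℝ) (t - t₀)) (Icc t₀ τ) := by
      intro u hu
      simp only [mem_Icc] at hu ⊢
      constructor <;> [linarith [hu.2]; linarith [hu.1, ht.2]]
    have hgc : ContinuousOn (fun u => g (t - u)) (Icc 0 (t - t₀)) :=
      hg.comp (continuousOn_const.sub continuousOn_id) hmapIcc
    have hkc : ContinuousOn (fun u => k (t - u)) (Icc 0 (t - t₀)) :=
      hk.comp (continuousOn_const.sub continuousOn_id) hmapIcc
    have hint : IntervalIntegrable (fun u => um u * k (t - u)) volume 0 (t - t₀) :=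
      VPaux.umk_integrable hb (hum_int _ hb) hkc
    have hbd' : ∀ u ∈ Ioc (0:ℝ) (t - t₀), ‖g (t - u)‖ ≤ k (t - u) := by
      intro u hu
      exact hbd (t - u) ⟨by linarith [hu.2], by linarith [hu.1]⟩
    obtain ⟨hii, hnorm⟩ := VPaux.Wint_bound hWcont hum_pos hum_bd (le_refl (0:ℝ)) hb hgc hint hbd'
    refine ⟨hii, ?_⟩
    rw [hconvW t g, hconvum t k]
    exact hnorm
  -- difference of integrals
  have hTsub : ∀ (φ ψ : ℝ → F), ContinuousOn φ (Icc t₀ τ) →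
      (∀ s ∈ Icc t₀ τ, ‖φ s - φap s‖ ≤ RR s) → ContinuousOn ψ (Icc t₀ τ) →
      (∀ s ∈ Icc t₀ τ, ‖ψ s - φap s‖ ≤ RR s) → ∀ t ∈ Icc t₀ τ,
      (∫ s in t₀..t, W (t - s) (P (φ s) s)) - (∫ s in t₀..t, W (t - s) (P (ψ s) s))
        = ∫ s in t₀..t, W (t - s) (P (φ s) s - P (ψ s) s) := by
    intro φ ψ hφc hφt hψc hψt t ht
    have hb : (0:ℝ) ≤ t - t₀ := by linarith [ht.1]
    obtain ⟨G1, hG10, hG1⟩ := hGex _ (hPcomp φ hφc hφt)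
    obtain ⟨G2, hG20, hG2⟩ := hGex _ (hPcomp ψ hψc hψt)
    have i1 := (core1 (fun s => P (φ s) s) (fun _ => G1) t ht (hPcomp φ hφc hφt)
      continuousOn_const (fun s hs => hG1 s ⟨hs.1, le_trans hs.2.le ht.2⟩)).1
    have i2 := (core1 (fun s => P (ψ s) s) (fun _ => G2) t ht (hPcomp ψ hψc hψt)
      continuousOn_const (fun s hs => hG2 s ⟨hs.1, le_trans hs.2.le ht.2⟩)).1
    rw [hconvW t (fun s => P (φ s) s), hconvW t (fun s => P (ψ s) s),
      hconvW t (fun s => P (φ s) s - P (ψ s) s), ← intervalIntegral.integral_sub i1 i2]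
    refine intervalIntegral.integral_congr_ae ?_
    filter_upwards with u hu
    rw [uIoc_of_le hb] at hu
    exact (hWsub u hu.1 _ _).symm
  -- invariance of the tube under the Picard map
  have hstepB : ∀ φ : ℝ → F, ContinuousOn φ (Icc t₀ τ) →
      (∀ s ∈ Icc t₀ τ, ‖φ s - φap s‖ ≤ RR s) → ∀ t ∈ Icc t₀ τ,
      ‖(v t + ∫ s in t₀..t, W (t - s) (P (φ s) s)) - φap t‖ ≤ RR t := by
    intro φ hφc hφt t ht
    have hφaptube : ∀ s ∈ Icc t₀ τ, ‖φap s - φap s‖ ≤ RR s := by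
      intro s hs; simp [hRR0 s hs]
    have hdecomp : (v t + ∫ s in t₀..t, W (t - s) (P (φ s) s)) - φap t
        = ((∫ s in t₀..t, W (t - s) (P (φ s) s)) - (∫ s in t₀..t, W (t - s) (P (φap s) s)))
          - (φap t - v t - ∫ s in t₀..t, W (t - s) (P (φap s) s)) := by abel
    rw [hdecomp, hTsub φ φap hφc hφt hφap hφaptube t ht]
    refine le_trans (norm_sub_le _ _) ?_
    have h1 : ‖∫ s in t₀..t, W (t - s) (P (φ s) s - P (φap s) s)‖
        ≤ ∫ s in t₀..t, um (t - s) * lgR s := by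
      refine (core1 (fun s => P (φ s) s - P (φap s) s) lgR t ht
        ((hPcomp φ hφc hφt).sub (hPcomp φap hφap hφaptube)) hlgRc ?_).2
      intro s hs
      have hsJ : s ∈ Icc t₀ τ := ⟨hs.1, le_trans hs.2.le ht.2⟩
      exact hgrow' s hsJ (φ s) (hφt s hsJ)
    have h2 := hEE' t ht
    have h3 := hctrl' t ht
    linarith [add_le_add h1 h2]
  -- choice of the exponential weight
  have hexpc : ∀ lam : ℝ, ContinuousOn (fun u : ℝ => Real.exp (-(lam * u))) (Icc 0 (τ - t₀)) :=
    fun lam => (Real.continuous_exp.comp (continuous_const.mul continuous_id).neg).continuousOn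
  have hIa0 : (0:ℝ) ≤ ∫ u in (0:ℝ)..(τ - t₀), um u :=
    VPaux.um_nonneg_int hum_pos (le_refl 0) ha
  obtain ⟨lam, hlam0, hlamq⟩ : ∃ lam : ℝ, 0 ≤ lam ∧
      L'' * (∫ u in (0:ℝ)..(τ - t₀), um u * Real.exp (-(lam * u))) ≤ 1/2 := by
    rcases eq_or_lt_of_le ha with ha0 | hapos
    · refine ⟨0, le_refl 0, ?_⟩
      rw [← ha0, intervalIntegral.integral_same]
      norm_num
    · have hIumc := VPaux.Ium_contOn ha (hum_int _ ha)
      have hIum0 : ContinuousWithinAt (fun x => ∫ u in (0:ℝ)..x, um u) (Icc 0 (τ - t₀)) 0 :=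
        hIumc 0 ⟨le_refl _, ha⟩
      rw [Metric.continuousWithinAt_iff] at hIum0
      obtain ⟨δ₃, hδ₃, hIum0⟩ := hIum0 (1/(4*L'')) (by positivity)
      have hεpos : 0 < min (δ₃/2) (τ - t₀) := lt_min (by linarith) hapos
      set ε := min (δ₃/2) (τ - t₀) with hεdef
      have hεa : ε ≤ τ - t₀ := min_le_right _ _
      have hIumε : (∫ u in (0:ℝ)..ε, um u) < 1/(4*L'') := by
        have h := hIum0 (x := ε) ⟨hεpos.le, hεa⟩ (by
          rw [Real.dist_eq, sub_zero, abs_of_pos hεpos]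
          calc ε ≤ δ₃/2 := min_le_left _ _
            _ < δ₃ := by linarith)
        rw [Real.dist_eq, intervalIntegral.integral_same, sub_zero] at h
        exact lt_of_le_of_lt (le_abs_self _) h
      have htt : Tendsto (fun l : ℝ => Real.exp (-(l * ε))) atTop (nhds 0) :=
        Real.tendsto_exp_neg_atTop_nhds_zero.comp (tendsto_id.atTop_mul_const hεpos)
      have htgt : 0 < (1:ℝ)/(4 * L'' * ((∫ u in (0:ℝ)..(τ - t₀), um u) + 1)) := by positivity
      obtain ⟨lam, hlam1, hlam2⟩ :=
        ((htt.eventually (gt_mem_nhds htgt)).and (eventually_ge_atTop (0:ℝ))).exists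
      refine ⟨lam, hlam2, ?_⟩
      have ifull : IntervalIntegrable (fun u => um u * Real.exp (-(lam * u))) volume 0 (τ - t₀) :=
        VPaux.umk_integrable ha (hum_int _ ha) (hexpc lam)
      have i1 : IntervalIntegrable (fun u => um u * Real.exp (-(lam * u))) volume 0 ε :=
        ifull.mono_set (by
          rw [uIcc_of_le hεpos.le, uIcc_of_le ha]
          exact Icc_subset_Icc (le_refl _) hεa)
      have i2 : IntervalIntegrable (fun u => um u * Real.exp (-(lam * u))) volume ε (τ - t₀) :=
        ifull.mono_set (by
          rw [uIcc_of_le hεa, uIcc_of_le ha]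
          exact Icc_subset_Icc hεpos.le (le_refl _))
      have hsplit := intervalIntegral.integral_add_adjacent_intervals i1 i2
      have ione : IntervalIntegrable (fun u => um u * (1:ℝ)) volume 0 ε :=
        VPaux.umk_integrable hεpos.le (hum_int _ hεpos.le) continuousOn_const
      have hJ1 : (∫ u in (0:ℝ)..ε, um u * Real.exp (-(lam * u))) ≤ ∫ u in (0:ℝ)..ε, um u := by
        have h1 : (∫ u in (0:ℝ)..ε, um u * Real.exp (-(lam * u))) ≤ ∫ u in (0:ℝ)..ε, um u * 1 :=
          VPaux.umk_mono_ptwise hum_pos (le_refl 0) hεpos.le i1 ione (fun u hu => by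
            rw [Real.exp_le_one_iff]
            have : 0 ≤ lam * u := mul_nonneg hlam2 hu.1.le
            linarith)
        simpa using h1
      have hJ2 : (∫ u in ε..(τ - t₀), um u * Real.exp (-(lam * u)))
          ≤ (∫ u in ε..(τ - t₀), um u) * Real.exp (-(lam * ε)) := by
        have iconst : IntervalIntegrable (fun u => um u * Real.exp (-(lam * ε))) volume ε (τ - t₀) :=
          ((hum_int _ ha).mono_set (by
            rw [uIcc_of_le hεa, uIcc_of_le ha]
            exact Icc_subset_Icc hεpos.le (le_refl _))).mul_const _
        have h1 : (∫ u in ε..(τ - t₀), um u * Real.exp (-(lam * u)))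
            ≤ ∫ u in ε..(τ - t₀), um u * Real.exp (-(lam * ε)) :=
          VPaux.umk_mono_ptwise hum_pos hεpos.le hεa i2 iconst (fun u hu => by
            apply Real.exp_le_exp.2
            have : lam * ε ≤ lam * u := mul_le_mul_of_nonneg_left hu.1.le hlam2
            linarith)
        rwa [intervalIntegral.integral_mul_const] at h1
      have humε : IntervalIntegrable um volume 0 ε :=
        (hum_int _ ha).mono_set (by
          rw [uIcc_of_le hεpos.le, uIcc_of_le ha]
          exact Icc_subset_Icc (le_refl _) hεa)
      have hummid : IntervalIntegrable um volume ε (τ - t₀) :=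
        (hum_int _ ha).mono_set (by
          rw [uIcc_of_le hεa, uIcc_of_le ha]
          exact Icc_subset_Icc hεpos.le (le_refl _))
      have hmid : (∫ u in ε..(τ - t₀), um u)
          = (∫ u in (0:ℝ)..(τ - t₀), um u) - ∫ u in (0:ℝ)..ε, um u := by
        have := intervalIntegral.integral_add_adjacent_intervals humε hummid
        linarith
      have hIumε0 : 0 ≤ ∫ u in (0:ℝ)..ε, um u :=
        VPaux.um_nonneg_int hum_pos (le_refl 0) hεpos.le
      have hexpb : Real.exp (-(lam * ε)) ≤ 1/(4 * L'' * ((∫ u in (0:ℝ)..(τ - t₀), um u) + 1)) :=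
        le_of_lt hlam1
      have hfinal2 : (∫ u in ε..(τ - t₀), um u) * Real.exp (-(lam * ε))
          ≤ (∫ u in (0:ℝ)..(τ - t₀), um u) * (1/(4 * L'' * ((∫ u in (0:ℝ)..(τ - t₀), um u) + 1))) := by
        apply mul_le_mul
        · rw [hmid]; linarith
        · exact hexpb
        · exact (Real.exp_pos _).le
        · exact hIa0
      have halg : L'' * ((∫ u in (0:ℝ)..(τ - t₀), um u)
          * (1/(4 * L'' * ((∫ u in (0:ℝ)..(τ - t₀), um u) + 1)))) ≤ 1/4 := by
        set Ia := ∫ u in (0:ℝ)..(τ - t₀), um u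
        have h1 : L'' * (Ia * (1/(4 * L'' * (Ia + 1)))) = Ia / (4 * (Ia + 1)) := by
          field_simp
        rw [h1, div_le_div_iff₀ (by positivity) (by norm_num)]
        nlinarith [hIa0]
      have hLIumε : L'' * (∫ u in (0:ℝ)..ε, um u) ≤ 1/4 := by
        have := mul_le_mul_of_nonneg_left hIumε.le hL''.le
        calc L'' * (∫ u in (0:ℝ)..ε, um u) ≤ L'' * (1/(4*L'')) := this
          _ = 1/4 := by
            field_simp
      calc L'' * (∫ u in (0:ℝ)..(τ - t₀), um u * Real.exp (-(lam * u)))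
          = L'' * ((∫ u in (0:ℝ)..ε, um u * Real.exp (-(lam * u)))
            + ∫ u in ε..(τ - t₀), um u * Real.exp (-(lam * u))) := by rw [hsplit]
        _ ≤ L'' * ((∫ u in (0:ℝ)..ε, um u)
            + (∫ u in ε..(τ - t₀), um u) * Real.exp (-(lam * ε))) := by
            apply mul_le_mul_of_nonneg_left _ hL''.le
            linarith
        _ = L'' * (∫ u in (0:ℝ)..ε, um u)
            + L'' * ((∫ u in ε..(τ - t₀), um u) * Real.exp (-(lam * ε))) := by ring
        _ ≤ 1/4 + 1/4 := by
            refine add_le_add hLIumε ?_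
            calc L'' * ((∫ u in ε..(τ - t₀), um u) * Real.exp (-(lam * ε)))
                ≤ L'' * ((∫ u in (0:ℝ)..(τ - t₀), um u)
                  * (1/(4 * L'' * ((∫ u in (0:ℝ)..(τ - t₀), um u) + 1)))) :=
                mul_le_mul_of_nonneg_left hfinal2 hL''.le
              _ ≤ 1/4 := halg
        _ = 1/2 := by norm_num
  -- the contraction estimate
  have hcontr : ∀ φ ψ : ℝ → F, ContinuousOn φ (Icc t₀ τ) →
      (∀ s ∈ Icc t₀ τ, ‖φ s - φap s‖ ≤ RR s) → ContinuousOn ψ (Icc t₀ τ) →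
      (∀ s ∈ Icc t₀ τ, ‖ψ s - φap s‖ ≤ RR s) →
      ∀ D : ℝ, 0 ≤ D → (∀ s ∈ Icc t₀ τ, ‖φ s - ψ s‖ ≤ D * Real.exp (lam * (s - t₀))) →
      ∀ t ∈ Icc t₀ τ,
      ‖(∫ s in t₀..t, W (t - s) (P (φ s) s)) - ∫ s in t₀..t, W (t - s) (P (ψ s) s)‖
        ≤ (1/2) * D * Real.exp (lam * (t - t₀)) := by
    intro φ ψ hφc hφt hψc hψt D hD hbd t ht
    have hb : (0:ℝ) ≤ t - t₀ := by linarith [ht.1]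
    have hba : t - t₀ ≤ τ - t₀ := by linarith [ht.2]
    rw [hTsub φ ψ hφc hφt hψc hψt t ht]
    have hkc : ContinuousOn (fun s => L'' * ‖φ s - ψ s‖) (Icc t₀ τ) :=
      continuousOn_const.mul (hφc.sub hψc).norm
    have h1 : ‖∫ s in t₀..t, W (t - s) (P (φ s) s - P (ψ s) s)‖
        ≤ ∫ s in t₀..t, um (t - s) * (L'' * ‖φ s - ψ s‖) := by
      refine (core1 _ _ t ht ((hPcomp φ hφc hφt).sub (hPcomp ψ hψc hψt)) hkc ?_).2
      intro s hs
      have hsJ : s ∈ Icc t₀ τ := ⟨hs.1, le_trans hs.2.le ht.2⟩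
      have := hLipt s hsJ s hsJ (φ s) (ψ s) (hφt s hsJ) (hψt s hsJ)
      simpa using this
    rw [hconvum t (fun s => L'' * ‖φ s - ψ s‖)] at h1
    have hmapIcc : MapsTo (fun u => t - u) (Icc (0:ℝ) (t - t₀)) (Icc t₀ τ) := by
      intro u hu
      simp only [mem_Icc] at hu ⊢
      constructor <;> [linarith [hu.2]; linarith [hu.1, ht.2]]
    have ik1 : IntervalIntegrable (fun u => um u * (L'' * ‖φ (t - u) - ψ (t - u)‖)) volume 0 (t - t₀) :=
      VPaux.umk_integrable hb (hum_int _ hb)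
        (hkc.comp (continuousOn_const.sub continuousOn_id) hmapIcc)
    have ik2 : IntervalIntegrable
        (fun u => um u * (L'' * (D * Real.exp (lam * (t - u - t₀))))) volume 0 (t - t₀) :=
      VPaux.umk_integrable hb (hum_int _ hb)
        (Continuous.continuousOn (continuous_const.mul (continuous_const.mul
          (Real.continuous_exp.comp (continuous_const.mul
            ((continuous_const.sub continuous_id).sub continuous_const))))))
    have h2 : (∫ u in (0:ℝ)..(t - t₀), um u * (L'' * ‖φ (t - u) - ψ (t - u)‖))
        ≤ ∫ u in (0:ℝ)..(t - t₀), um u * (L'' * (D * Real.exp (lam * (t - u - t₀)))) := by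
      refine VPaux.umk_mono_ptwise hum_pos (le_refl 0) hb ik1 ik2 ?_
      intro u hu
      have hsJ : t - u ∈ Icc t₀ τ := ⟨by linarith [hu.2], by linarith [hu.1, ht.2]⟩
      have := hbd (t - u) hsJ
      exact mul_le_mul_of_nonneg_left this hL''.le
    have h3 : (∫ u in (0:ℝ)..(t - t₀), um u * (L'' * (D * Real.exp (lam * (t - u - t₀)))))
        = (L'' * D * Real.exp (lam * (t - t₀)))
          * ∫ u in (0:ℝ)..(t - t₀), um u * Real.exp (-(lam * u)) := by
      rw [← intervalIntegral.integral_const_mul]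
      refine intervalIntegral.integral_congr fun u _ => ?_
      have he : Real.exp (lam * (t - u - t₀))
          = Real.exp (lam * (t - t₀)) * Real.exp (-(lam * u)) := by
        rw [← Real.exp_add]
        congr 1
        ring
      rw [he]
      ring
    have h4 : (∫ u in (0:ℝ)..(t - t₀), um u * Real.exp (-(lam * u)))
        ≤ ∫ u in (0:ℝ)..(τ - t₀), um u * Real.exp (-(lam * u)) :=
      VPaux.umk_mono_right hum_pos (hum_int _ ha) (hexpc lam)
        (fun u _ => (Real.exp_pos _).le) hb hba (le_refl _)
    have h5 : (L'' * D * Real.exp (lam * (t - t₀)))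
          * (∫ u in (0:ℝ)..(t - t₀), um u * Real.exp (-(lam * u)))
        ≤ (L'' * D * Real.exp (lam * (t - t₀)))
          * ∫ u in (0:ℝ)..(τ - t₀), um u * Real.exp (-(lam * u)) :=
      mul_le_mul_of_nonneg_left h4 (by positivity)
    have h6 : (L'' * D * Real.exp (lam * (t - t₀)))
          * (∫ u in (0:ℝ)..(τ - t₀), um u * Real.exp (-(lam * u)))
        ≤ (1/2) * D * Real.exp (lam * (t - t₀)) := by
      have hDe : 0 ≤ D * Real.exp (lam * (t - t₀)) := by positivity
      have := mul_le_mul_of_nonneg_left hlamq hDe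
      calc (L'' * D * Real.exp (lam * (t - t₀)))
            * (∫ u in (0:ℝ)..(τ - t₀), um u * Real.exp (-(lam * u)))
          = (D * Real.exp (lam * (t - t₀)))
            * (L'' * ∫ u in (0:ℝ)..(τ - t₀), um u * Real.exp (-(lam * u))) := by ring
        _ ≤ (D * Real.exp (lam * (t - t₀))) * (1/2) := this
        _ = (1/2) * D * Real.exp (lam * (t - t₀)) := by ring
    calc ‖∫ s in t₀..t, W (t - s) (P (φ s) s - P (ψ s) s)‖
        ≤ ∫ u in (0:ℝ)..(t - t₀), um u * (L'' * ‖φ (t - u) - ψ (t - u)‖) := h1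
      _ ≤ ∫ u in (0:ℝ)..(t - t₀), um u * (L'' * (D * Real.exp (lam * (t - u - t₀)))) := h2
      _ = (L'' * D * Real.exp (lam * (t - t₀)))
          * ∫ u in (0:ℝ)..(t - t₀), um u * Real.exp (-(lam * u)) := h3
      _ ≤ (L'' * D * Real.exp (lam * (t - t₀)))
          * ∫ u in (0:ℝ)..(τ - t₀), um u * Real.exp (-(lam * u)) := h5
      _ ≤ (1/2) * D * Real.exp (lam * (t - t₀)) := h6
  -- continuity of the singular convolution
  have hIumc := VPaux.Ium_contOn ha (hum_int _ ha)
  have hPhiCont : ∀ g : ℝ → Fm, ContinuousOn g (Icc t₀ τ) →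
      ContinuousOn (fun t => ∫ s in t₀..t, W (t - s) (g s)) (Icc t₀ τ) := by
    intro g hg
    obtain ⟨G, hG0, hG⟩ := hGex g hg
    have hUC := isCompact_Icc.uniformContinuousOn_of_continuous hg
    rw [Metric.uniformContinuousOn_iff] at hUC
    intro t ht
    rw [Metric.continuousWithinAt_iff]
    intro ε hε
    obtain ⟨δ₁, hδ₁p, hδ₁⟩ := hUC (ε / (2 * ((∫ u in (0:ℝ)..(τ - t₀), um u) + 1))) (by positivity)
    have hIcw := hIumc (t - t₀) ⟨by linarith [ht.1], by linarith [ht.2]⟩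
    rw [Metric.continuousWithinAt_iff] at hIcw
    obtain ⟨δ₂, hδ₂p, hIcw⟩ := hIcw (ε / (8 * (G + 1))) (by positivity)
    refine ⟨min (δ₁/2) δ₂, by positivity, ?_⟩
    have KB : ∀ x y : ℝ, x ∈ Icc t₀ τ → y ∈ Icc t₀ τ → x ≤ y →
        dist x t < min (δ₁/2) δ₂ → dist y t < min (δ₁/2) δ₂ →
        ‖(∫ s in t₀..y, W (y - s) (g s)) - ∫ s in t₀..x, W (x - s) (g s)‖ < ε := by
      intro x y hx hy hxy hdx hdy
      have hbx : (0:ℝ) ≤ x - t₀ := by linarith [hx.1]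
      have hby : (0:ℝ) ≤ y - t₀ := by linarith [hy.1]
      have hxyb : x - t₀ ≤ y - t₀ := by linarith
      have hmapX : MapsTo (fun u => x - u) (Icc (0:ℝ) (x - t₀)) (Icc t₀ τ) := by
        intro u hu
        simp only [mem_Icc] at hu ⊢
        constructor <;> [linarith [hu.2]; linarith [hu.1, hx.2]]
      have hmapYX : MapsTo (fun u => y - u) (Icc (0:ℝ) (x - t₀)) (Icc t₀ τ) := by
        intro u hu
        simp only [mem_Icc] at hu ⊢
        constructor <;> [linarith [hu.2]; linarith [hu.1, hy.2]]
      have iY := (core1 g (fun _ => G) y hy hg continuousOn_const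
        (fun s hs => hG s ⟨hs.1, le_trans hs.2.le hy.2⟩)).1
      have iY1 : IntervalIntegrable (fun u => W u (g (y - u))) volume 0 (x - t₀) :=
        iY.mono_set (by
          rw [uIcc_of_le hbx, uIcc_of_le hby]
          exact Icc_subset_Icc (le_refl _) hxyb)
      have iY2 : IntervalIntegrable (fun u => W u (g (y - u))) volume (x - t₀) (y - t₀) :=
        iY.mono_set (by
          rw [uIcc_of_le hxyb, uIcc_of_le hby]
          exact Icc_subset_Icc hbx (le_refl _))
      have iX := (core1 g (fun _ => G) x hx hg continuousOn_const
        (fun s hs => hG s ⟨hs.1, le_trans hs.2.le hx.2⟩)).1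
      have hsplit : (∫ u in (0:ℝ)..(y - t₀), W u (g (y - u)))
          = (∫ u in (0:ℝ)..(x - t₀), W u (g (y - u)))
            + ∫ u in (x - t₀)..(y - t₀), W u (g (y - u)) :=
        (intervalIntegral.integral_add_adjacent_intervals iY1 iY2).symm
      have hdiff : (∫ u in (0:ℝ)..(x - t₀), W u (g (y - u)))
            - (∫ u in (0:ℝ)..(x - t₀), W u (g (x - u)))
          = ∫ u in (0:ℝ)..(x - t₀), W u (g (y - u) - g (x - u)) := by
        rw [← intervalIntegral.integral_sub iY1 iX]
        refine intervalIntegral.integral_congr_ae ?_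
        filter_upwards with u hu
        rw [uIoc_of_le hbx] at hu
        exact (hWsub u hu.1 _ _).symm
      -- bound on the difference part
      have hd1 : ‖∫ u in (0:ℝ)..(x - t₀), W u (g (y - u) - g (x - u))‖
          ≤ ∫ u in (0:ℝ)..(x - t₀), um u * (ε / (2 * ((∫ u in (0:ℝ)..(τ - t₀), um u) + 1))) := by
        refine (VPaux.Wint_bound hWcont hum_pos hum_bd (le_refl (0:ℝ)) hbx
          ((hg.comp (continuousOn_const.sub continuousOn_id) hmapYX).sub
            (hg.comp (continuousOn_const.sub continuousOn_id) hmapX))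
          (VPaux.umk_integrable hbx (hum_int _ hbx) continuousOn_const) ?_).2
        intro u hu
        have h1 : dist (y - u) (x - u) < δ₁ := by
          rw [Real.dist_eq]
          have h2 : |y - u - (x - u)| = |y - x| := by congr 1; ring
          rw [h2, abs_of_nonneg (by linarith : (0:ℝ) ≤ y - x)]
          rw [Real.dist_eq] at hdx hdy
          have h3 := abs_lt.1 (lt_of_lt_of_le hdx (min_le_left _ _))
          have h4 := abs_lt.1 (lt_of_lt_of_le hdy (min_le_left _ _))
          linarith
        have := hδ₁ (y - u) (hmapYX ⟨hu.1.le, hu.2⟩) (x - u) (hmapX ⟨hu.1.le, hu.2⟩) h1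
        rw [dist_eq_norm] at this
        exact this.le
      have hd1' : (∫ u in (0:ℝ)..(x - t₀), um u * (ε / (2 * ((∫ u in (0:ℝ)..(τ - t₀), um u) + 1))))
          ≤ ε/2 := by
        rw [intervalIntegral.integral_mul_const]
        have h5 : (∫ u in (0:ℝ)..(x - t₀), um u) ≤ ∫ u in (0:ℝ)..(τ - t₀), um u :=
          VPaux.um_mono_right hum_pos (hum_int _ ha) hbx (by linarith [hx.2]) (le_refl _)
        calc (∫ u in (0:ℝ)..(x - t₀), um u) * (ε / (2 * ((∫ u in (0:ℝ)..(τ - t₀), um u) + 1)))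
            ≤ (∫ u in (0:ℝ)..(τ - t₀), um u) * (ε / (2 * ((∫ u in (0:ℝ)..(τ - t₀), um u) + 1))) :=
              mul_le_mul_of_nonneg_right h5 (by positivity)
          _ ≤ ε/2 := by
              rw [mul_comm, div_mul_eq_mul_div, div_le_div_iff₀ (by positivity) (by norm_num)]
              nlinarith [hIa0, hε.le]
      -- bound on the middle part
      have hd2 : ‖∫ u in (x - t₀)..(y - t₀), W u (g (y - u))‖
          ≤ ∫ u in (x - t₀)..(y - t₀), um u * G := by
        refine (VPaux.Wint_bound hWcont hum_pos hum_bd hbx hxyb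
          ((hg.comp (continuousOn_const.sub continuousOn_id) (by
            intro u hu
            simp only [mem_Icc, id_eq, Pi.sub_apply] at hu ⊢
            constructor <;> [linarith [hu.2]; linarith [hu.1, hy.2, hbx]])))
          (((hum_int _ hby).mono_set (by
            rw [uIcc_of_le hxyb, uIcc_of_le hby]
            exact Icc_subset_Icc hbx (le_refl _))).mul_const _) ?_).2
        intro u hu
        exact hG (y - u) ⟨by linarith [hu.2], by linarith [hu.1, hy.2]⟩
      have humx : IntervalIntegrable um volume 0 (x - t₀) :=
        (hum_int _ hby).mono_set (by
          rw [uIcc_of_le hbx, uIcc_of_le hby]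
          exact Icc_subset_Icc (le_refl _) hxyb)
      have hummid : IntervalIntegrable um volume (x - t₀) (y - t₀) :=
        (hum_int _ hby).mono_set (by
          rw [uIcc_of_le hxyb, uIcc_of_le hby]
          exact Icc_subset_Icc hbx (le_refl _))
      have hd2' : (∫ u in (x - t₀)..(y - t₀), um u * G) ≤ ε/4 := by
        rw [intervalIntegral.integral_mul_const]
        have hmid : (∫ u in (x - t₀)..(y - t₀), um u)
            = (∫ u in (0:ℝ)..(y - t₀), um u) - ∫ u in (0:ℝ)..(x - t₀), um u := by
          have := intervalIntegral.integral_add_adjacent_intervals humx hummid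
          linarith
        have e1 : |(∫ u in (0:ℝ)..(y - t₀), um u) - ∫ u in (0:ℝ)..(t - t₀), um u|
            < ε / (8 * (G + 1)) := by
          have := hIcw (x := y - t₀) ⟨hby, by linarith [hy.2]⟩ (by
            rw [Real.dist_eq]
            have : y - t₀ - (t - t₀) = y - t := by ring
            rw [this, ← Real.dist_eq]
            exact lt_of_lt_of_le hdy (min_le_right _ _))
          rwa [Real.dist_eq] at this
        have e2 : |(∫ u in (0:ℝ)..(x - t₀), um u) - ∫ u in (0:ℝ)..(t - t₀), um u|
            < ε / (8 * (G + 1)) := by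
          have := hIcw (x := x - t₀) ⟨hbx, by linarith [hx.2]⟩ (by
            rw [Real.dist_eq]
            have : x - t₀ - (t - t₀) = x - t := by ring
            rw [this, ← Real.dist_eq]
            exact lt_of_lt_of_le hdx (min_le_right _ _))
          rwa [Real.dist_eq] at this
        have e3 : (∫ u in (x - t₀)..(y - t₀), um u) ≤ ε / (4 * (G + 1)) := by
          rw [hmid]
          have h6 := abs_lt.1 e1
          have h7 := abs_lt.1 e2
          have h8 : ε / (8 * (G + 1)) + ε / (8 * (G + 1)) = ε / (4 * (G + 1)) := by
            field_simp
            ring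
          linarith
        calc (∫ u in (x - t₀)..(y - t₀), um u) * G ≤ (ε / (4 * (G + 1))) * G :=
            mul_le_mul_of_nonneg_right e3 hG0
          _ ≤ ε/4 := by
              rw [div_mul_eq_mul_div, div_le_div_iff₀ (by positivity) (by norm_num)]
              nlinarith [hε.le]
      -- combine
      have hrw : (∫ s in t₀..y, W (y - s) (g s)) - ∫ s in t₀..x, W (x - s) (g s)
          = (∫ u in (0:ℝ)..(x - t₀), W u (g (y - u) - g (x - u)))
            + ∫ u in (x - t₀)..(y - t₀), W u (g (y - u)) := by
        rw [hconvW y g, hconvW x g, hsplit, ← hdiff]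
        abel
      rw [hrw]
      calc ‖(∫ u in (0:ℝ)..(x - t₀), W u (g (y - u) - g (x - u)))
            + ∫ u in (x - t₀)..(y - t₀), W u (g (y - u))‖
          ≤ ‖∫ u in (0:ℝ)..(x - t₀), W u (g (y - u) - g (x - u))‖
            + ‖∫ u in (x - t₀)..(y - t₀), W u (g (y - u))‖ := norm_add_le _ _
        _ ≤ ε/2 + ε/4 := add_le_add (le_trans hd1 hd1') (le_trans hd2 hd2')
        _ < ε := by linarith
    intro t' ht' hdist
    rcases le_total t' t with h | h
    · rw [dist_eq_norm, norm_sub_rev]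
      exact KB t' t ht' ht h hdist (by simpa using (by positivity : (0:ℝ) < min (δ₁/2) δ₂))
    · rw [dist_eq_norm]
      exact KB t t' ht ht' h (by simpa using (by positivity : (0:ℝ) < min (δ₁/2) δ₂)) hdist
  -- the complete metric space of curves in the tube
  have hXcl : IsClosed {φ : C(↥(Icc t₀ τ), F) | ∀ p : ↥(Icc t₀ τ), ‖φ p - φap ↑p‖ ≤ RR ↑p} := by
    have hrw : {φ : C(↥(Icc t₀ τ), F) | ∀ p : ↥(Icc t₀ τ), ‖φ p - φap ↑p‖ ≤ RR ↑p}
        = ⋂ p : ↥(Icc t₀ τ), {φ : C(↥(Icc t₀ τ), F) | ‖φ p - φap ↑p‖ ≤ RR ↑p} := by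
      ext φ
      simp [mem_iInter]
    rw [hrw]
    exact isClosed_iInter fun p => isClosed_le
      (((continuous_eval_const p).sub continuous_const).norm) continuous_const
  haveI hXcomplete : CompleteSpace
      ↥{φ : C(↥(Icc t₀ τ), F) | ∀ p : ↥(Icc t₀ τ), ‖φ p - φap ↑p‖ ≤ RR ↑p} :=
    hXcl.completeSpace_coe
  have hφapX : (⟨(Icc t₀ τ).restrict φap, hφap.restrict⟩ : C(↥(Icc t₀ τ), F))
      ∈ {φ : C(↥(Icc t₀ τ), F) | ∀ p : ↥(Icc t₀ τ), ‖φ p - φap ↑p‖ ≤ RR ↑p} := by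
    intro p
    show ‖φap ↑p - φap ↑p‖ ≤ RR ↑p
    rw [sub_self, norm_zero]
    exact hRR0 ↑p p.2
  haveI hXne : Nonempty
      ↥{φ : C(↥(Icc t₀ τ), F) | ∀ p : ↥(Icc t₀ τ), ‖φ p - φap ↑p‖ ≤ RR ↑p} := ⟨⟨_, hφapX⟩⟩
  -- extension facts
  have hext_tube : ∀ φ : ↥{φ : C(↥(Icc t₀ τ), F) | ∀ p : ↥(Icc t₀ τ), ‖φ p - φap ↑p‖ ≤ RR ↑p},
      ∀ s ∈ Icc t₀ τ, ‖IccExtend hτ ⇑φ.1 s - φap s‖ ≤ RR s := by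
    intro φ s hs
    rw [IccExtend_of_mem hτ _ hs]
    exact φ.2 ⟨s, hs⟩
  have hext_cont : ∀ φ : ↥{φ : C(↥(Icc t₀ τ), F) | ∀ p : ↥(Icc t₀ τ), ‖φ p - φap ↑p‖ ≤ RR ↑p},
      ContinuousOn (IccExtend hτ ⇑φ.1) (Icc t₀ τ) :=
    fun φ => (φ.1.continuous.comp continuous_projIcc).continuousOn
  -- the Picard map
  have hTcont : ∀ φ : ↥{φ : C(↥(Icc t₀ τ), F) | ∀ p : ↥(Icc t₀ τ), ‖φ p - φap ↑p‖ ≤ RR ↑p},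
      ContinuousOn (fun t => v t + ∫ s in t₀..t, W (t - s) (P (IccExtend hτ ⇑φ.1 s) s))
        (Icc t₀ τ) :=
    fun φ => hv.add (hPhiCont _ (hPcomp _ (hext_cont φ) (hext_tube φ)))
  set TX : ↥{φ : C(↥(Icc t₀ τ), F) | ∀ p : ↥(Icc t₀ τ), ‖φ p - φap ↑p‖ ≤ RR ↑p}
      → ↥{φ : C(↥(Icc t₀ τ), F) | ∀ p : ↥(Icc t₀ τ), ‖φ p - φap ↑p‖ ≤ RR ↑p} :=
    fun φ => ⟨⟨(Icc t₀ τ).restrict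
        (fun t => v t + ∫ s in t₀..t, W (t - s) (P (IccExtend hτ ⇑φ.1 s) s)),
      (hTcont φ).restrict⟩,
      fun p => hstepB _ (hext_cont φ) (hext_tube φ) ↑p p.2⟩ with hTXdef
  have hTXval : ∀ φ, ∀ p : ↥(Icc t₀ τ),
      (TX φ).1 p = v ↑p + ∫ s in t₀..↑p, W (↑p - s) (P (IccExtend hτ ⇑φ.1 s) s) := by
    intro φ p
    rw [hTXdef]
    rfl
  -- iterated contraction estimate
  have hdist_apply : ∀ (φ ψ : ↥{φ : C(↥(Icc t₀ τ), F) | ∀ p : ↥(Icc t₀ τ), ‖φ p - φap ↑p‖ ≤ RR ↑p})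
      (p : ↥(Icc t₀ τ)), ‖φ.1 p - ψ.1 p‖ ≤ dist φ ψ := by
    intro φ ψ p
    rw [Subtype.dist_eq, ← dist_eq_norm]
    exact ContinuousMap.dist_apply_le_dist p
  have hiter : ∀ n : ℕ,
      ∀ φ ψ : ↥{φ : C(↥(Icc t₀ τ), F) | ∀ p : ↥(Icc t₀ τ), ‖φ p - φap ↑p‖ ≤ RR ↑p},
      ∀ p : ↥(Icc t₀ τ),
      ‖(TX^[n] φ).1 p - (TX^[n] ψ).1 p‖ ≤ (1/2)^n * dist φ ψ * Real.exp (lam * (↑p - t₀)) := by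
    intro n
    induction n with
    | zero =>
      intro φ ψ p
      simp only [Function.iterate_zero, id_eq, pow_zero, one_mul]
      have h1 := hdist_apply φ ψ p
      have h2 : (1:ℝ) ≤ Real.exp (lam * (↑p - t₀)) :=
        Real.one_le_exp (mul_nonneg hlam0 (by linarith [p.2.1]))
      nlinarith [dist_nonneg (x := φ) (y := ψ)]
    | succ n ih =>
      intro φ ψ p
      simp only [Function.iterate_succ_apply']
      rw [hTXval, hTXval]
      have key := hcontr (IccExtend hτ ⇑(TX^[n] φ).1) (IccExtend hτ ⇑(TX^[n] ψ).1)
        (hext_cont _) (hext_tube _) (hext_cont _) (hext_tube _)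
        ((1/2)^n * dist φ ψ) (by positivity)
        (fun s hs => by
          rw [IccExtend_of_mem hτ _ hs, IccExtend_of_mem hτ _ hs]
          exact ih φ ψ ⟨s, hs⟩)
        ↑p p.2
      rw [add_sub_add_left_eq_sub]
      refine le_trans key ?_
      rw [pow_succ]
      ring_nf
      exact le_refl _
  -- contraction of an iterate, fixed point
  obtain ⟨n, hn⟩ := exists_pow_lt_of_lt_one (x := Real.exp (-(lam * (τ - t₀))))
    (Real.exp_pos _) (by norm_num : (1/2:ℝ) < 1)
  have hc0 : (0:ℝ) ≤ (1/2)^n * Real.exp (lam * (τ - t₀)) := by positivity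
  have hc1 : (1/2:ℝ)^n * Real.exp (lam * (τ - t₀)) < 1 := by
    have h := mul_lt_mul_of_pos_right hn (Real.exp_pos (lam * (τ - t₀)))
    rwa [← Real.exp_add, neg_add_cancel, Real.exp_zero] at h
  have hlip : ∀ φ ψ : ↥{φ : C(↥(Icc t₀ τ), F) | ∀ p : ↥(Icc t₀ τ), ‖φ p - φap ↑p‖ ≤ RR ↑p},
      dist (TX^[n] φ) (TX^[n] ψ) ≤ ((1/2)^n * Real.exp (lam * (τ - t₀))) * dist φ ψ := by
    intro φ ψ
    rw [Subtype.dist_eq]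
    refine (ContinuousMap.dist_le (by positivity)).2 fun p => ?_
    rw [dist_eq_norm]
    refine le_trans (hiter n φ ψ p) ?_
    have hle : Real.exp (lam * (↑p - t₀)) ≤ Real.exp (lam * (τ - t₀)) :=
      Real.exp_le_exp.2 (mul_le_mul_of_nonneg_left (by linarith [p.2.2]) hlam0)
    have hd0 : (0:ℝ) ≤ (1/2)^n * dist φ ψ := by positivity
    calc (1/2)^n * dist φ ψ * Real.exp (lam * (↑p - t₀))
        ≤ (1/2)^n * dist φ ψ * Real.exp (lam * (τ - t₀)) :=
          mul_le_mul_of_nonneg_left hle hd0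
      _ = ((1/2)^n * Real.exp (lam * (τ - t₀))) * dist φ ψ := by ring
  have hcontracting : ContractingWith ((1/2:ℝ)^n * Real.exp (lam * (τ - t₀))).toNNReal (TX^[n]) := by
    constructor
    · rw [← NNReal.coe_lt_coe, Real.coe_toNNReal _ hc0, NNReal.coe_one]
      exact hc1
    · refine LipschitzWith.of_dist_le_mul fun φ ψ => ?_
      rw [Real.coe_toNNReal _ hc0]
      exact hlip φ ψ
  have hxfix := hcontracting.fixedPoint_isFixedPt
  set xstar := ContractingWith.fixedPoint (TX^[n]) hcontracting with hxdef
  have hTfix : TX xstar = xstar := by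
    have h1 : Function.IsFixedPt (TX^[n]) (TX xstar) := by
      rw [Function.IsFixedPt, ← Function.iterate_succ_apply, Function.iterate_succ_apply']
      rw [show TX^[n] xstar = xstar from hxfix]
    exact (hcontracting.fixedPoint_unique h1).trans
      (hcontracting.fixedPoint_unique hxfix).symm
  constructor
  · -- existence
    refine ⟨IccExtend hτ ⇑xstar.1, (xstar.1.continuous.comp continuous_projIcc).continuousOn,
      hext_tube xstar, ?_⟩
    intro t ht
    have h1 : IccExtend hτ ⇑xstar.1 t = xstar.1 ⟨t, ht⟩ := IccExtend_of_mem hτ _ ht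
    rw [h1]
    have h2 : xstar.1 ⟨t, ht⟩ = (TX xstar).1 ⟨t, ht⟩ := by rw [hTfix]
    rw [h2, hTXval]
  · -- uniqueness
    intro φ ψ hφ hψ
    obtain ⟨hφc, hφt, hφe⟩ := hφ
    obtain ⟨hψc, hψt, hψe⟩ := hψ
    have hrc : ContinuousOn (fun t => ‖φ t - ψ t‖ * Real.exp (-(lam * (t - t₀)))) (Icc t₀ τ) :=
      ((hφc.sub hψc).norm).mul (Continuous.continuousOn
        (Real.continuous_exp.comp (continuous_const.mul
          ((continuous_id.sub continuous_const))).neg))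
    obtain ⟨tm, htm, htmax⟩ := isCompact_Icc.exists_isMaxOn (nonempty_Icc.2 hτ) hrc
    set r : ℝ → ℝ := fun t => ‖φ t - ψ t‖ * Real.exp (-(lam * (t - t₀))) with hrdef
    have hD0 : 0 ≤ r tm := mul_nonneg (norm_nonneg _) (Real.exp_pos _).le
    have hbd : ∀ s ∈ Icc t₀ τ, ‖φ s - ψ s‖ ≤ (r tm) * Real.exp (lam * (s - t₀)) := by
      intro s hs
      have h1 : r s ≤ r tm := htmax hs
      have h2 : ‖φ s - ψ s‖ = r s * Real.exp (lam * (s - t₀)) := by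
        rw [hrdef, mul_assoc, ← Real.exp_add, neg_add_cancel, Real.exp_zero, mul_one]
      rw [h2]
      exact mul_le_mul_of_nonneg_right h1 (Real.exp_pos _).le
    have key := hcontr φ ψ hφc hφt hψc hψt (r tm) hD0 hbd
    have hfin : ∀ t ∈ Icc t₀ τ, r t ≤ (1/2) * r tm := by
      intro t ht
      have h3 := key t ht
      have h4 : φ t - ψ t = (∫ s in t₀..t, W (t - s) (P (φ s) s))
          - ∫ s in t₀..t, W (t - s) (P (ψ s) s) := by
        rw [hφe t ht, hψe t ht]
        abel
      have h5 : ‖φ t - ψ t‖ ≤ (1/2) * r tm * Real.exp (lam * (t - t₀)) := by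
        rw [h4]
        exact h3
      calc r t = ‖φ t - ψ t‖ * Real.exp (-(lam * (t - t₀))) := rfl
        _ ≤ ((1/2) * r tm * Real.exp (lam * (t - t₀))) * Real.exp (-(lam * (t - t₀))) :=
          mul_le_mul_of_nonneg_right h5 (Real.exp_pos _).le
        _ = (1/2) * r tm := by
          rw [mul_assoc, ← Real.exp_add, add_neg_cancel, Real.exp_zero, mul_one]
    have hrtm0 : r tm = 0 := le_antisymm (by linarith [hfin tm htm]) hD0
    intro t ht
    have h6 : r t = 0 := le_antisymm (hrtm0 ▸ htmax ht)
      (mul_nonneg (norm_nonneg _) (Real.exp_pos _).le)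
    have h7 : ‖φ t - ψ t‖ = 0 := by
      rcases mul_eq_zero.1 h6 with h | h
      · exact h
      · exact absurd h (Real.exp_ne_zero _)
    exact sub_eq_zero.1 (norm_eq_zero.1 h7)

end VPaux



set_option maxHeartbeats 1000000 in
/-- Main theorem on approximate solutions of the abstract semilinear Volterra problem:
if the control inequality `ℰ(t) + ∫_{t₀}^t u₋(t−s) ℓ(ℛ(s),s) ds ≤ ℛ(t)` has a solution `ℛ`
on `[t₀,T)` (with `ℛ(t) < ρ(t)`), then the Volterra problem `VP(f₀,t₀)` has an exact solution
`φ` on `[t₀,T)` with `‖φ(t) − φ_ap(t)‖ ≤ ℛ(t)` there. -/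
theorem stmt_0
    {F Fm : Type*}
    [NormedAddCommGroup F] [NormedSpace ℝ F] [CompleteSpace F]
    [NormedAddCommGroup Fm] [NormedSpace ℝ Fm] [CompleteSpace Fm]
    -- F is a dense subspace of Fm, with continuous inclusion ι
    (ι : F →L[ℝ] Fm) (hι_inj : Function.Injective ι) (hι_dense : DenseRange ι)
    -- the semigroup (e^{tA})_{t ≥ 0} on Fm, strongly continuous
    (U : ℝ → Fm →L[ℝ] Fm)
    (hU0 : U 0 = ContinuousLinearMap.id ℝ Fm)
    (hUsem : ∀ s ≥ (0:ℝ), ∀ t ≥ (0:ℝ), U (s + t) = (U s).comp (U t))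
    (hUsc : ∀ f : Fm, ContinuousOn (fun t => U t f) (Ici (0:ℝ)))
    -- e^{tA} maps F into F (lift V), giving a strongly continuous semigroup on F
    (V : ℝ → F → F)
    (hV : ∀ t ≥ (0:ℝ), ∀ x : F, ι (V t x) = U t (ι x))
    (hVcont : ContinuousOn (fun p : F × ℝ => V p.2 p.1) (univ ×ˢ Ici (0:ℝ)))
    -- e^{tA} maps Fm into F for t > 0 (lift W), continuously on Fm × (0,∞)
    (W : ℝ → Fm → F)
    (hW : ∀ t > (0:ℝ), ∀ f : Fm, ι (W t f) = U t f)
    (hWcont : ContinuousOn (fun p : Fm × ℝ => W p.2 p.1) (univ ×ˢ Ioi (0:ℝ)))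
    -- the estimator u₋ for the semigroup, with u₋(t) = O(1/t^{1-σ}) at 0⁺
    (um : ℝ → ℝ)
    (hum_cont : ContinuousOn um (Ioi (0:ℝ)))
    (hum_pos : ∀ t > (0:ℝ), 0 < um t)
    (hum_bd : ∀ t > (0:ℝ), ∀ f : Fm, ‖W t f‖ ≤ um t * ‖f‖)
    (σ : ℝ) (hσ : σ ∈ Ioc (0:ℝ) 1)
    (hum_O : ∃ C : ℝ, ∃ δ > (0:ℝ), ∀ t ∈ Ioo (0:ℝ) δ, um t ≤ C / t ^ (1 - σ))
    -- the nonlinearity P, with semi-open domain, Lipschitz on closed bounded subsets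
    (Dom : Set (F × ℝ)) (P : F → ℝ → Fm)
    (hDom : ∀ p ∈ Dom, ∃ δ > (0:ℝ), ∃ r > (0:ℝ),
      ∀ f : F, ‖f - p.1‖ < r → ∀ t ∈ Ico p.2 (p.2 + δ), (f, t) ∈ Dom)
    (hPlip : ∀ C : Set (F × ℝ), IsClosed C → Bornology.IsBounded C → C ⊆ Dom →
      ∃ L M : ℝ, ∀ p ∈ C, ∀ q ∈ C,
        ‖P p.1 p.2 - P q.1 q.2‖ ≤ L * ‖p.1 - q.1‖ + M * |p.2 - q.2|)
    -- datum and time interval I = [t₀, T), T ∈ (t₀, +∞]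
    (t₀ : ℝ) (f₀ : F) (hf₀ : (f₀, t₀) ∈ Dom)
    (T : EReal) (hT : (t₀ : EReal) < T)
    (I : Set ℝ) (hI : I = {t : ℝ | t₀ ≤ t ∧ (t : EReal) < T})
    -- the approximate solution φap, with graph in Dom
    (φap : ℝ → F) (hφap_cont : ContinuousOn φap I)
    (hφap_dom : ∀ t ∈ I, (φap t, t) ∈ Dom)
    -- integral error estimator EE
    (EE : ℝ → ℝ) (hEE_cont : ContinuousOn EE I) (hEE_nonneg : ∀ t ∈ I, 0 ≤ EE t)
    (hEE : ∀ t ∈ I,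
      ‖φap t - V (t - t₀) f₀ - ∫ s in t₀..t, W (t - s) (P (φap s) s)‖ ≤ EE t)
    -- growth estimator lg for P from φap, defined on the subgraph of ρ : I → (0,+∞]
    (ρ : ℝ → ENNReal) (hρ_cont : ContinuousOn ρ I) (hρ_pos : ∀ t ∈ I, 0 < ρ t)
    (lg : ℝ → ℝ → ℝ)
    (hlg_cont : ContinuousOn (fun p : ℝ × ℝ => lg p.1 p.2)
      {p : ℝ × ℝ | p.2 ∈ I ∧ 0 ≤ p.1 ∧ ENNReal.ofReal p.1 < ρ p.2})
    (hlg_nonneg : ∀ t ∈ I, ∀ r : ℝ, 0 ≤ r → ENNReal.ofReal r < ρ t → 0 ≤ lg r t)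
    (hlg_mono : ∀ t ∈ I, ∀ r r' : ℝ, 0 ≤ r → r ≤ r' → ENNReal.ofReal r' < ρ t →
      lg r t ≤ lg r' t)
    (htube : ∀ t ∈ I, ∀ f : F, ENNReal.ofReal ‖f - φap t‖ < ρ t → (f, t) ∈ Dom)
    (hgrowth : ∀ t ∈ I, ∀ f : F, ENNReal.ofReal ‖f - φap t‖ < ρ t →
      ‖P f t - P (φap t) t‖ ≤ lg ‖f - φap t‖ t)
    -- the control function RR, solving the control inequality
    (RR : ℝ → ℝ) (hRR_cont : ContinuousOn RR I) (hRR_nonneg : ∀ t ∈ I, 0 ≤ RR t)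
    (hRR_lt : ∀ t ∈ I, ENNReal.ofReal (RR t) < ρ t)
    (hctrl : ∀ t ∈ I, EE t + ∫ s in t₀..t, um (t - s) * lg (RR s) s ≤ RR t) :
    ∃ φ : ℝ → F, ContinuousOn φ I ∧ (∀ t ∈ I, (φ t, t) ∈ Dom) ∧
      (∀ t ∈ I, φ t = V (t - t₀) f₀ + ∫ s in t₀..t, W (t - s) (P (φ s) s)) ∧
      ∀ t ∈ I, ‖φ t - φap t‖ ≤ RR t := by
  classical
  have ht₀I : t₀ ∈ I := by rw [hI]; exact ⟨le_refl _, hT⟩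
  have hsubI : ∀ t ∈ I, Icc t₀ t ⊆ I := by
    intro t ht s hs
    rw [hI] at ht ⊢
    exact ⟨hs.1, lt_of_le_of_lt (EReal.coe_le_coe_iff.2 hs.2) ht.2⟩
  have hum_int : ∀ b : ℝ, 0 ≤ b → IntervalIntegrable um volume 0 b := fun b hb =>
    VPaux.um_integrable hum_cont hum_pos hσ hum_O hb
  have hWsub : ∀ u > (0:ℝ), ∀ f g : Fm, W u (f - g) = W u f - W u g := by
    intro u hu f g
    apply hι_inj
    rw [map_sub, hW u hu, hW u hu, hW u hu, map_sub]
  have hVpart : ContinuousOn (fun t => V (t - t₀) f₀) (Ici t₀) := by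
    have h2 : ContinuousOn (fun t : ℝ => ((f₀, t - t₀) : F × ℝ)) (Ici t₀) :=
      continuousOn_const.prodMk (continuousOn_id.sub continuousOn_const)
    exact hVcont.comp h2 (fun t ht => ⟨mem_univ _, by simpa using ht⟩)
  -- existence and uniqueness on each compact subinterval
  have main : ∀ τ, ∀ hτI : τ ∈ I,
      (∃ φ, VPaux.SolOn W P (fun t => V (t - t₀) f₀) φap RR t₀ τ φ) ∧
      ∀ φ ψ, VPaux.SolOn W P (fun t => V (t - t₀) f₀) φap RR t₀ τ φ →
        VPaux.SolOn W P (fun t => V (t - t₀) f₀) φap RR t₀ τ ψ → EqOn φ ψ (Icc t₀ τ) := by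
    intro τ hτI
    have hτJ : t₀ ≤ τ := by rw [hI] at hτI; exact hτI.1
    have hJI : Icc t₀ τ ⊆ I := hsubI τ hτI
    obtain ⟨Mφ, hMφ⟩ := isCompact_Icc.exists_bound_of_continuousOn (hφap_cont.mono hJI)
    obtain ⟨MR, hMR⟩ := isCompact_Icc.exists_bound_of_continuousOn (hRR_cont.mono hJI)
    have hsnd : ContinuousOn (fun p : F × ℝ => p.2) ((univ : Set F) ×ˢ Icc t₀ τ) :=
      continuous_snd.continuousOn
    have hmaps : MapsTo (fun p : F × ℝ => p.2) ((univ : Set F) ×ˢ Icc t₀ τ) (Icc t₀ τ) :=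
      fun p hp => hp.2
    have hqc : ContinuousOn (fun p : F × ℝ => ‖p.1 - φap p.2‖ - RR p.2)
        ((univ : Set F) ×ˢ Icc t₀ τ) :=
      ((continuous_fst.continuousOn.sub (((hφap_cont.mono hJI)).comp hsnd hmaps)).norm).sub
        ((hRR_cont.mono hJI).comp hsnd hmaps)
    have hCeq : {p : F × ℝ | p.2 ∈ Icc t₀ τ ∧ ‖p.1 - φap p.2‖ ≤ RR p.2}
        = ((univ : Set F) ×ˢ Icc t₀ τ)
          ∩ (fun p : F × ℝ => ‖p.1 - φap p.2‖ - RR p.2) ⁻¹' (Iic 0) := by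
      ext p
      simp only [mem_setOf_eq, mem_inter_iff, mem_prod, mem_univ, true_and, mem_preimage,
        mem_Iic, sub_nonpos]
    have hCc : IsClosed {p : F × ℝ | p.2 ∈ Icc t₀ τ ∧ ‖p.1 - φap p.2‖ ≤ RR p.2} := by
      rw [hCeq]
      exact hqc.preimage_isClosed_of_isClosed (isClosed_univ.prod isClosed_Icc) isClosed_Iic
    have hCb : Bornology.IsBounded {p : F × ℝ | p.2 ∈ Icc t₀ τ ∧ ‖p.1 - φap p.2‖ ≤ RR p.2} := by
      refine ((Metric.isBounded_closedBall (x := (0:F)) (r := MR + Mφ)).prod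
        (Metric.isBounded_Icc (a := t₀) (b := τ))).subset ?_
      rintro ⟨f, s⟩ ⟨hs, hf⟩
      refine ⟨?_, hs⟩
      rw [mem_closedBall_zero_iff]
      have h1 : ‖f‖ ≤ ‖f - φap s‖ + ‖φap s‖ := by
        calc ‖f‖ = ‖(f - φap s) + φap s‖ := by rw [sub_add_cancel]
          _ ≤ ‖f - φap s‖ + ‖φap s‖ := norm_add_le _ _
      have h2 := hMR s hs
      have h3 := hMφ s hs
      rw [Real.norm_eq_abs] at h2
      have h4 : RR s ≤ MR := le_trans (le_abs_self _) h2
      linarith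
    have hCD : {p : F × ℝ | p.2 ∈ Icc t₀ τ ∧ ‖p.1 - φap p.2‖ ≤ RR p.2} ⊆ Dom := by
      rintro ⟨f, s⟩ ⟨hs, hf⟩
      exact htube s (hJI hs) f
        (lt_of_le_of_lt (ENNReal.ofReal_le_ofReal hf) (hRR_lt s (hJI hs)))
    obtain ⟨L, M, hLM⟩ := hPlip _ hCc hCb hCD
    have hgrow' : ∀ s ∈ Icc t₀ τ, ∀ f : F, ‖f - φap s‖ ≤ RR s →
        ‖P f s - P (φap s) s‖ ≤ lg (RR s) s := by
      intro s hs f hf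
      have hsI := hJI hs
      have hlt : ENNReal.ofReal ‖f - φap s‖ < ρ s :=
        lt_of_le_of_lt (ENNReal.ofReal_le_ofReal hf) (hRR_lt s hsI)
      exact le_trans (hgrowth s hsI f hlt)
        (hlg_mono s hsI _ _ (norm_nonneg _) hf (hRR_lt s hsI))
    have hLipt : ∀ s ∈ Icc t₀ τ, ∀ s' ∈ Icc t₀ τ, ∀ f g : F, ‖f - φap s‖ ≤ RR s →
        ‖g - φap s'‖ ≤ RR s' →
        ‖P f s - P g s'‖ ≤ (max L 0 + 1) * ‖f - g‖ + (max M 0 + 1) * |s - s'| := by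
      intro s hs s' hs' f g hf hg
      have h0 := hLM (f, s) ⟨hs, hf⟩ (g, s') ⟨hs', hg⟩
      simp only at h0
      have h2 : L * ‖f - g‖ ≤ (max L 0 + 1) * ‖f - g‖ :=
        mul_le_mul_of_nonneg_right (by linarith [le_max_left L 0]) (norm_nonneg _)
      have h3 : M * |s - s'| ≤ (max M 0 + 1) * |s - s'| :=
        mul_le_mul_of_nonneg_right (by linarith [le_max_left M 0]) (abs_nonneg _)
      linarith
    have hlgRc : ContinuousOn (fun s => lg (RR s) s) (Icc t₀ τ) := by
      refine hlg_cont.comp ((hRR_cont.mono hJI).prodMk continuousOn_id) ?_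
      intro s hs
      exact ⟨hJI hs, hRR_nonneg s (hJI hs), hRR_lt s (hJI hs)⟩
    exact VPaux.solve W hWcont hWsub um hum_pos hum_bd hum_int P
      (fun t => V (t - t₀) f₀) φap EE RR (fun s => lg (RR s) s)
      (max L 0 + 1) (max M 0 + 1) t₀ τ hτJ hgrow' hLipt
      (by positivity) (hVpart.mono (fun x hx => hx.1)) (hφap_cont.mono hJI)
      (hRR_cont.mono hJI) (fun s hs => hRR_nonneg s (hJI hs)) hlgRc
      (fun s hs => hlg_nonneg s (hJI hs) (RR s) (hRR_nonneg s (hJI hs)) (hRR_lt s (hJI hs)))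
      (fun t ht => hEE t (hJI ht)) (fun t ht => hctrl t (hJI ht))
  choose sol hsol using fun τ (h : τ ∈ I) => (main τ h).1
  have huniq := fun τ (h : τ ∈ I) => (main τ h).2
  have hagree : ∀ τ, ∀ hτI : τ ∈ I, ∀ t (htJ : t ∈ Icc t₀ τ),
      (if h : t ∈ I then sol t h t else f₀) = sol τ hτI t := by
    intro τ hτI t htJ
    have htI : t ∈ I := hsubI τ hτI htJ
    rw [dif_pos htI]
    have hS1 := hsol t htI
    have hS2 : VPaux.SolOn W P (fun t' => V (t' - t₀) f₀) φap RR t₀ t (sol τ hτI) := by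
      obtain ⟨h1, h2, h3⟩ := hsol τ hτI
      exact ⟨h1.mono (Icc_subset_Icc_right htJ.2),
        fun s hs => h2 s ⟨hs.1, le_trans hs.2 htJ.2⟩,
        fun r hr => h3 r ⟨hr.1, le_trans hr.2 htJ.2⟩⟩
    exact huniq t htI _ _ hS1 hS2 ⟨htJ.1, le_refl t⟩
  have hnext : ∀ t ∈ I, ∃ τ, τ ∈ I ∧ t < τ := by
    intro t ht
    rw [hI] at ht
    obtain ⟨x, hx1, hx2⟩ := EReal.lt_iff_exists_real_btwn.1 ht.2
    refine ⟨x, ?_, EReal.coe_lt_coe_iff.1 hx1⟩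
    rw [hI]
    exact ⟨le_trans ht.1 (EReal.coe_le_coe_iff.1 hx1.le), hx2⟩
  have hmemIcc : ∀ t ∈ I, t ∈ Icc t₀ t := by
    intro t ht
    rw [hI] at ht
    exact ⟨ht.1, le_refl t⟩
  refine ⟨fun t => if h : t ∈ I then sol t h t else f₀, ?_, ?_, ?_, ?_⟩
  · -- continuity
    intro t ht
    obtain ⟨τ, hτI, htτ⟩ := hnext t ht
    have ht₀t : t₀ ≤ t := by rw [hI] at ht; exact ht.1
    have hc : ContinuousWithinAt (sol τ hτI) (Icc t₀ τ) t :=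
      (hsol τ hτI).1 t ⟨ht₀t, htτ.le⟩
    have hc2 : ContinuousWithinAt (sol τ hτI) (I ∩ Iio τ) t := by
      refine hc.mono ?_
      intro s hs
      have : t₀ ≤ s := by rw [hI] at hs; exact hs.1.1
      exact ⟨this, hs.2.le⟩
    have hc3 : ContinuousWithinAt (fun t' => if h : t' ∈ I then sol t' h t' else f₀)
        (I ∩ Iio τ) t := by
      refine hc2.congr ?_ ?_
      · intro s hs
        have hst₀ : t₀ ≤ s := by rw [hI] at hs; exact hs.1.1
        exact hagree τ hτI s ⟨hst₀, hs.2.le⟩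
      · exact hagree τ hτI t ⟨ht₀t, htτ.le⟩
    exact (continuousWithinAt_inter (Iio_mem_nhds htτ)).1 hc3
  · -- domain
    intro t ht
    have h1 := hagree t ht t (hmemIcc t ht)
    have h2 := (hsol t ht).2.1 t (hmemIcc t ht)
    show ((if h : t ∈ I then sol t h t else f₀), t) ∈ Dom
    refine htube t ht _ ?_
    rw [h1]
    exact lt_of_le_of_lt (ENNReal.ofReal_le_ofReal h2) (hRR_lt t ht)
  · -- Volterra equation
    intro t ht
    have h1 := hagree t ht t (hmemIcc t ht)
    have h2 := (hsol t ht).2.2 t (hmemIcc t ht)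
    show (if h : t ∈ I then sol t h t else f₀)
      = V (t - t₀) f₀ + ∫ s in t₀..t, W (t - s) (P (if h : s ∈ I then sol s h s else f₀) s)
    rw [h1, h2]
    congr 1
    refine intervalIntegral.integral_congr ?_
    intro s hs
    rw [uIcc_of_le (by rw [hI] at ht; exact ht.1)] at hs
    have h3 := hagree t ht s hs
    show W (t - s) (P (sol t ht s) s) = W (t - s) (P (if h : s ∈ I then sol s h s else f₀) s)
    rw [h3]
  · -- tube estimate
    intro t ht
    have h1 := hagree t ht t (hmemIcc t ht)
    have h2 := (hsol t ht).2.1 t (hmemIcc t ht)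
    show ‖(if h : t ∈ I then sol t h t else f₀) - φap t‖ ≤ RR t
    rw [h1]
    exact h2
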